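/- For any w ∈ W and any reduced word I_w of w, one has T_{I_w} = Σ_{v≤w} q_{I_w,v} δ_v in Q'_W, where all q_{I_w,v} ∈ Q', the sum is over v ≤ w in the Bruhat order, and the top coefficient is q_{I_w,w} = Π_{α∈Φ_w} (x_α − x_γ)/x_α. -/

import Mathlib

open scoped Classical
noncomputable section

/-- Truncation (up to degree `N` in each variable) of the double power series
`F(a,b) = Σ_{i,j} c i j • a^i b^j` of a coefficient family `c`, substituted at two
polynomials `a b` in three variables. -/
noncomputable def fglTrunc {R : Type} [CommRing R] (c : ℕ → ℕ → R) (N : ℕ)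
    (a b : MvPolynomial (Fin 3) R) : MvPolynomial (Fin 3) R :=
  ∑ p ∈ Finset.range N ×ˢ Finset.range N, MvPolynomial.C (c p.1 p.2) * a ^ p.1 * b ^ p.2

/-- A one-dimensional commutative formal group law `F(x,y) = Σ_{i,j} c i j x^i y^j`
over `R`, recorded by its coefficients.  Associativity is expressed through
arbitrarily high truncations. -/
structure FormalGroupLaw (R : Type) [CommRing R] where
  c : ℕ → ℕ → R
  c_comm : ∀ i j, c i j = c j i
  c_norm : c 1 0 = 1
  c_zero : ∀ i, i ≠ 1 → c i 0 = 0
  c_assoc : ∀ (N : ℕ) (d : Fin 3 →₀ ℕ), d 0 + d 1 + d 2 < N →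
    MvPolynomial.coeff d
      (fglTrunc c N (fglTrunc c N (MvPolynomial.X 0) (MvPolynomial.X 1)) (MvPolynomial.X 2)) =
    MvPolynomial.coeff d
      (fglTrunc c N (MvPolynomial.X 0) (fglTrunc c N (MvPolynomial.X 1) (MvPolynomial.X 2)))

/-- The whole setting of the paper: a generalized Cartan matrix together with its
root datum and Weyl group `W`, a Demazure lattice `Λ`, a one-dimensional commutative
formal group law `F` over `R`, the formal group algebra `S = R[[Λ]]_F` (presented by
its defining relations together with an `R`-algebra isomorphism with a multivariate
power series ring), the localization `Q` of `S` at the classes `x_α` of all positive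
roots, the twisted group algebra `Q_W = Q ⋊ R[W]` and its action on `Q`. -/
structure DemazureSetup (R : Type) [CommRing R] : Type 1 where
  /-- size of the generalized Cartan matrix -/
  n : ℕ
  /-- the Demazure lattice `Λ` -/
  Λ : Type
  [Λadd : AddCommGroup Λ]
  [Λfree : Module.Free ℤ Λ]
  [Λfin : Module.Finite ℤ Λ]
  /-- the Weyl group -/
  W : Type
  [Wgrp : Group W]
  [Wact : DistribMulAction W Λ]
  /-- the simple reflections -/
  s : Fin n → W
  s_sq : ∀ i, s i * s i = 1
  s_gen : Subgroup.closure (Set.range s) = ⊤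
  /-- the simple roots, viewed inside the Demazure lattice -/
  sroot : Fin n → Λ
  roots_indep : LinearIndependent ℤ sroot
  /-- pairing with the simple coroots: `scoroot i λ = ⟨λ, α_i^∨⟩ ∈ ℤ` -/
  scoroot : Fin n → (Λ →+ ℤ)
  /-- diagonal entries of the generalized Cartan matrix `a_{ii} = ⟨α_i, α_i^∨⟩ = 2` -/
  cartan_diag : ∀ i, scoroot i (sroot i) = 2
  /-- off-diagonal entries `a_{ij} = ⟨α_j, α_i^∨⟩` are nonpositive -/
  cartan_off : ∀ i j, i ≠ j → scoroot i (sroot j) ≤ 0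
  cartan_zero : ∀ i j, scoroot i (sroot j) = 0 ↔ scoroot j (sroot i) = 0
  /-- the simple reflections act by `s_i(λ) = λ - ⟨λ, α_i^∨⟩ α_i` -/
  s_act : ∀ (i : Fin n) (lam : Λ), s i • lam = lam - scoroot i lam • sroot i
  /-- `W` acts faithfully on `Λ` -/
  act_faithful : ∀ w : W, (∀ lam : Λ, w • lam = lam) → w = 1
  /-- every simple root can be extended to a `ℤ`-basis of `Λ` (Demazure lattice) -/
  basis_ext : ∀ i, ∃ (b : Module.Basis (Fin (Module.finrank ℤ Λ)) ℤ Λ) (j : Fin (Module.finrank ℤ Λ)),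
    b j = sroot i
  /-- the formal group law `F` -/
  fgl : FormalGroupLaw R
  /-- the formal group algebra `S = R[[Λ]]_F` -/
  S : Type
  [Scr : CommRing S]
  [Salg : Algebra R S]
  /-- the generators `x_λ`, `λ ∈ Λ`, of the formal group algebra -/
  x : Λ → S
  x_zero : x 0 = 0
  /-- the augmentation map `ε : S → R`, `x_λ ↦ 0` -/
  aug : S →ₐ[R] R
  aug_x : ∀ lam, aug (x lam) = 0
  /-- the defining relation `x_{λ+μ} = F(x_λ, x_μ)`, modulo every power of the
  augmentation ideal -/
  x_add : ∀ (lam mu : Λ) (N : ℕ),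
    x (lam + mu) - ∑ p ∈ Finset.range N ×ˢ Finset.range N,
      algebraMap R S (fgl.c p.1 p.2) * x lam ^ p.1 * x mu ^ p.2
    ∈ RingHom.ker aug.toRingHom ^ N
  /-- a `ℤ`-basis of `Λ` -/
  e : Module.Basis (Fin (Module.finrank ℤ Λ)) ℤ Λ
  /-- `S` is the power series ring on the `x`-classes of a basis of `Λ` -/
  ψ : S ≃ₐ[R] MvPowerSeries (Fin (Module.finrank ℤ Λ)) R
  ψ_x : ∀ j, ψ (x (e j)) = MvPowerSeries.X j
  aug_ψ : ∀ a : S, aug a = MvPowerSeries.constantCoeff (σ := Fin (Module.finrank ℤ Λ)) (R := R) (ψ a)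
  /-- the `W`-action on `S` induced by `w(x_λ) = x_{w(λ)}` -/
  [SWact : MulSemiringAction W S]
  smul_x : ∀ (w : W) (lam : Λ), w • x lam = x (w • lam)
  smul_algebraMap : ∀ (w : W) (r : R), w • (algebraMap R S r) = algebraMap R S r
  smul_IF : ∀ (w : W) (N : ℕ) (a : S),
    a ∈ RingHom.ker aug.toRingHom ^ N → w • a ∈ RingHom.ker aug.toRingHom ^ N
  /-- the localization `Q = S[1/x_α : α ∈ Φ₊]` -/
  Q : Type
  [Qcr : CommRing Q]
  [Qalg : Algebra S Q]
  loc : IsLocalization (Submonoid.closure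
    (x '' {v | (∃ (w : W) (i : Fin n), v = w • sroot i) ∧
               v ∈ (AddSubmonoid.closure (Set.range sroot) : AddSubmonoid Λ)})) Q
  /-- the induced `W`-action on `Q` -/
  [QWact : MulSemiringAction W Q]
  smul_SQ : ∀ (w : W) (a : S), w • (algebraMap S Q a) = algebraMap S Q (w • a)
  /-- the twisted group algebra `Q_W = Q ⋊_R R[W]` -/
  QW : Type
  [QWring : Ring QW]
  [QWalg : Algebra R QW]
  /-- the canonical inclusion `Q → Q_W`, `q ↦ q δ_e` -/
  ι : Q →+* QW
  /-- the canonical basis elements `δ_w` of `Q_W` -/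
  δ : W →* QW
  ι_alg : ∀ r : R, ι (algebraMap S Q (algebraMap R S r)) = algebraMap R QW r
  /-- the twisted commutation rule `δ_w · q = w(q) · δ_w` -/
  twist : ∀ (w : W) (q : Q), δ w * ι q = ι (w • q) * δ w
  /-- `Q_W` is a free left `Q`-module with basis `{δ_w}_{w ∈ W}` -/
  qw_free : ∀ z : QW, ∃! c : W →₀ Q, z = c.sum fun w q => ι q * δ w
  /-- the action of `Q_W` on `Q`, `(q δ_w) · q' = q · w(q')` -/
  act : QW → Q → Q
  act_addl : ∀ (z z' : QW) (q : Q), act (z + z') q = act z q + act z' q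
  act_spec : ∀ (q : Q) (w : W) (q' : Q), act (ι q * δ w) q' = q * (w • q')

namespace DemazureSetup

attribute [instance] Λadd Λfree Λfin Wgrp Wact Scr Salg SWact Qcr Qalg QWact QWring QWalg

variable {R : Type} [CommRing R] (D : DemazureSetup R)

/-- the set `Φ` of (real) roots -/
def roots : Set D.Λ := {v | ∃ (w : D.W) (i : Fin D.n), v = w • D.sroot i}

/-- the set `Φ₊` of positive roots -/
def posRoots : Set D.Λ :=
  {v | (∃ (w : D.W) (i : Fin D.n), v = w • D.sroot i) ∧
       v ∈ (AddSubmonoid.closure (Set.range D.sroot) : AddSubmonoid D.Λ)}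

/-- the set `Φ₋ = -Φ₊` of negative roots -/
def negRoots : Set D.Λ := {v | -v ∈ D.posRoots}

/-- the reflection `s_α ∈ W` associated to a real root `α` -/
def refl (v : D.Λ) : D.W :=
  if h : v ∈ D.roots then h.choose * D.s h.choose_spec.choose * h.choose⁻¹ else 1

/-- the product `s_{i_1} ⋯ s_{i_l}` of a word in the simple reflections -/
def wordProd (ω : List (Fin D.n)) : D.W := (ω.map D.s).prod

/-- the Coxeter length function on `W` -/
def len (w : D.W) : ℕ := sInf {l | ∃ ω : List (Fin D.n), ω.length = l ∧ D.wordProd ω = w}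

/-- `ω` is a reduced word for `w` -/
def IsReduced (w : D.W) (ω : List (Fin D.n)) : Prop :=
  D.wordProd ω = w ∧ ω.length = D.len w

/-- a choice of a reduced word `I_w` for every `w ∈ W` -/
def IsRedSystem (I : D.W → List (Fin D.n)) : Prop := ∀ w, D.IsReduced w (I w)

/-- the Bruhat order on `W` (subword characterization) -/
def bruhatLE (u w : D.W) : Prop :=
  ∃ ω ω' : List (Fin D.n), D.IsReduced w ω ∧ ω'.Sublist ω ∧ D.wordProd ω' = u

def bruhatLT (u w : D.W) : Prop := D.bruhatLE u w ∧ u ≠ w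

/-- the inversion set `Φ_w = {α ∈ Φ₊ : w⁻¹(α) ∈ Φ₋}` -/
def invSet (w : D.W) : Set D.Λ := {v | v ∈ D.posRoots ∧ w⁻¹ • v ∈ D.negRoots}

/-- the augmentation ideal `I_F = ker ε ⊂ S` -/
def IF : Ideal D.S := RingHom.ker D.aug.toRingHom

/-- the element `c_v = Π_{α ∈ Φ_v} x_α ∈ S` -/
def cElt (v : D.W) : D.S := ∏ᶠ a ∈ D.invSet v, D.x a

/-- the image of `x_λ` in the localization `Q` -/
def xQ (v : D.Λ) : D.Q := algebraMap D.S D.Q (D.x v)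

/-- the image of `a ∈ S` in the twisted group algebra `Q_W` -/
def SQW (a : D.S) : D.QW := D.ι (algebraMap D.S D.Q a)

/-- the formal Demazure element `X_α = (1/x_α)(1 - δ_{s_α}) ∈ Q_W` -/
def Xel (v : D.Λ) : D.QW := D.ι (Ring.inverse (D.xQ v)) * (1 - D.δ (D.refl v))

/-- the formal push-pull element `Y_α = 1/x_{-α} + (1/x_α) δ_{s_α} ∈ Q_W` -/
def Yel (v : D.Λ) : D.QW := D.ι (Ring.inverse (D.xQ (-v))) + D.ι (Ring.inverse (D.xQ v)) * D.δ (D.refl v)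

/-- `X_i = X_{α_i}` -/
def Xi (i : Fin D.n) : D.QW := D.Xel (D.sroot i)

/-- `Y_i = Y_{α_i}` -/
def Yi (i : Fin D.n) : D.QW := D.Yel (D.sroot i)

/-- `X_I = X_{i_1} ⋯ X_{i_l}` for a word `I = (i_1, …, i_l)` -/
def Xword (ω : List (Fin D.n)) : D.QW := (ω.map D.Xi).prod

/-- `Y_I = Y_{i_1} ⋯ Y_{i_l}` for a word `I = (i_1, …, i_l)` -/
def Yword (ω : List (Fin D.n)) : D.QW := (ω.map D.Yi).prod

/-- the formal affine Demazure algebra `D_F`: the `R`-subalgebra of `Q_W` generated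
by `S` and the elements `X_α`, `α ∈ Φ` -/
def DF : Subalgebra R D.QW :=
  Algebra.adjoin R (Set.range D.SQW ∪ D.Xel '' D.roots)

/-- `z · S ⊆ S` for `z ∈ Q_W` -/
def PreservesS (z : D.QW) : Prop :=
  ∀ a : D.S, ∃ b : D.S, D.act z (algebraMap D.S D.Q a) = algebraMap D.S D.Q b

end DemazureSetup

end
noncomputable section
/-- The setting of Section 6:  `Γ = ℤγ` is a free abelian group of rank one,
`S' = R[[Γ ⊕ Λ]]_F` is the formal group algebra of `Γ ⊕ Λ` (with `W` acting trivially
on `Γ`), `Q' = S'[1/x_α : α ∈ Φ]` and `Q'_W = Q' ⋊_R R[W]` is the twisted group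
algebra, acting on `Q'`.  Elements of `Γ ⊕ Λ = ℤ ⊕ Λ` are recorded as pairs `(k, λ)`,
with `γ = (1,0)` and `λ = (0,λ)`. -/
structure HeckeSetup (R : Type) [CommRing R] (D : DemazureSetup R) : Type 1 where
  /-- the formal group algebra `S' = R[[Γ ⊕ Λ]]_F` -/
  S' : Type
  [S'cr : CommRing S']
  [S'alg : Algebra R S']
  /-- the generators `x_{(k,λ)}`, `(k,λ) ∈ Γ ⊕ Λ` -/
  x' : ℤ × D.Λ → S'
  x'_zero : x' 0 = 0
  /-- the augmentation map -/
  aug' : S' →ₐ[R] R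
  aug'_x : ∀ p, aug' (x' p) = 0
  x'_add : ∀ (p q : ℤ × D.Λ) (N : ℕ),
    x' (p + q) - ∑ t ∈ Finset.range N ×ˢ Finset.range N,
      algebraMap R S' (D.fgl.c t.1 t.2) * x' p ^ t.1 * x' q ^ t.2
    ∈ RingHom.ker aug'.toRingHom ^ N
  /-- `S'` is the power series ring on `x_γ` and the `x`-classes of a basis of `Λ` -/
  ψ' : S' ≃ₐ[R] MvPowerSeries (Fin (Module.finrank ℤ D.Λ + 1)) R
  ψ'_γ : ψ' (x' (1, 0)) = MvPowerSeries.X 0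
  ψ'_x : ∀ j : Fin (Module.finrank ℤ D.Λ), ψ' (x' (0, D.e j)) = MvPowerSeries.X j.succ
  aug'_ψ : ∀ a : S',
    aug' a = MvPowerSeries.constantCoeff (σ := Fin (Module.finrank ℤ D.Λ + 1)) (R := R) (ψ' a)
  /-- the `W`-action on `S'`, trivial on `Γ` -/
  [S'Wact : MulSemiringAction D.W S']
  smul_x' : ∀ (w : D.W) (p : ℤ × D.Λ), w • x' p = x' (p.1, w • p.2)
  smul_alg' : ∀ (w : D.W) (r : R), w • (algebraMap R S' r) = algebraMap R S' r
  smul_IF' : ∀ (w : D.W) (N : ℕ) (a : S'),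
    a ∈ RingHom.ker aug'.toRingHom ^ N → w • a ∈ RingHom.ker aug'.toRingHom ^ N
  /-- the localization `Q' = S'[1/x_α : α ∈ Φ]` at all real roots -/
  Q' : Type
  [Q'cr : CommRing Q']
  [Q'alg : Algebra S' Q']
  loc' : IsLocalization (Submonoid.closure
    ((fun v => x' (0, v)) '' {v | ∃ (w : D.W) (i : Fin D.n), v = w • D.sroot i})) Q'
  [Q'Wact : MulSemiringAction D.W Q']
  smul_SQ' : ∀ (w : D.W) (a : S'), w • (algebraMap S' Q' a) = algebraMap S' Q' (w • a)
  /-- the twisted group algebra `Q'_W = Q' ⋊_R R[W]` -/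
  QW' : Type
  [QW'ring : Ring QW']
  [QW'alg : Algebra R QW']
  ι' : Q' →+* QW'
  δ' : D.W →* QW'
  ι'_alg : ∀ r : R, ι' (algebraMap S' Q' (algebraMap R S' r)) = algebraMap R QW' r
  twist' : ∀ (w : D.W) (q : Q'), δ' w * ι' q = ι' (w • q) * δ' w
  qw'_free : ∀ z : QW', ∃! c : D.W →₀ Q', z = c.sum fun w q => ι' q * δ' w
  /-- the action of `Q'_W` on `Q'` -/
  act' : QW' → Q' → Q'
  act'_addl : ∀ (z z' : QW') (q : Q'), act' (z + z') q = act' z q + act' z' q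
  act'_spec : ∀ (q : Q') (w : D.W) (q' : Q'), act' (ι' q * δ' w) q' = q * (w • q')

namespace HeckeSetup

attribute [instance] S'cr S'alg S'Wact Q'cr Q'alg Q'Wact QW'ring QW'alg

variable {R : Type} [CommRing R] {D : DemazureSetup R} (H : HeckeSetup R D)

/-- the image of `x_{(k,λ)}` in the localization `Q'` -/
def xQ' (p : ℤ × D.Λ) : H.Q' := algebraMap H.S' H.Q' (H.x' p)

/-- the image of `a ∈ S'` in `Q'_W` -/
def SQW' (a : H.S') : H.QW' := H.ι' (algebraMap H.S' H.Q' a)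

/-- the formal Demazure element `X_α ∈ Q'_W` -/
def Xel' (v : D.Λ) : H.QW' := H.ι' (Ring.inverse (H.xQ' (0, v))) * (1 - H.δ' (D.refl v))

/-- the element `T_α = x_γ X_α + δ_{s_α} ∈ Q'_W` -/
def Tel (v : D.Λ) : H.QW' := H.SQW' (H.x' (1, 0)) * H.Xel' v + H.δ' (D.refl v)

/-- `T_i = T_{α_i}` -/
def Ti (i : Fin D.n) : H.QW' := H.Tel (D.sroot i)

/-- `T_I = T_{i_1} ⋯ T_{i_l}` -/
def Tword (ω : List (Fin D.n)) : H.QW' := (ω.map H.Ti).prod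

/-- the formal affine Hecke algebra `H_F`:  the `R`-subalgebra of `Q'_W` generated by
`S'` and the elements `T_1, …, T_n` -/
def HF : Subalgebra R H.QW' := Algebra.adjoin R (Set.range H.SQW' ∪ Set.range H.Ti)

end HeckeSetup
end
open scoped Classical
noncomputable section

namespace DemazureSetup

variable {R : Type} [CommRing R] (D : DemazureSetup R)

/-! ### Basic word and length lemmas -/

lemma wordProd_nil : D.wordProd [] = 1 := rfl

lemma wordProd_cons (i : Fin D.n) (ω : List (Fin D.n)) :
    D.wordProd (i :: ω) = D.s i * D.wordProd ω := by
  simp [wordProd]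

lemma wordProd_append (ω₁ ω₂ : List (Fin D.n)) :
    D.wordProd (ω₁ ++ ω₂) = D.wordProd ω₁ * D.wordProd ω₂ := by
  simp [wordProd]

lemma wordProd_singleton (i : Fin D.n) : D.wordProd [i] = D.s i := by
  simp [wordProd]

lemma s_inv (i : Fin D.n) : (D.s i)⁻¹ = D.s i := by
  rw [inv_eq_iff_mul_eq_one, D.s_sq]

lemma wordProd_reverse (ω : List (Fin D.n)) :
    D.wordProd ω.reverse = (D.wordProd ω)⁻¹ := by
  induction ω with
  | nil => simp [wordProd]
  | cons i ω ih =>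
      rw [List.reverse_cons, D.wordProd_append, ih, D.wordProd_cons]
      rw [D.wordProd_cons, D.wordProd_nil, mul_inv_rev, D.s_inv, mul_one]

lemma exists_word (w : D.W) : ∃ ω : List (Fin D.n), D.wordProd ω = w := by
  have hw : w ∈ Subgroup.closure (Set.range D.s) := by rw [D.s_gen]; trivial
  induction hw using Subgroup.closure_induction with
  | one => exact ⟨[], rfl⟩
  | mem x hx =>
      obtain ⟨i, rfl⟩ := hx
      exact ⟨[i], D.wordProd_singleton i⟩
  | mul x y _ _ hx hy =>
      obtain ⟨ω₁, rfl⟩ := hx; obtain ⟨ω₂, rfl⟩ := hy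
      exact ⟨ω₁ ++ ω₂, D.wordProd_append ω₁ ω₂⟩
  | inv x _ hx =>
      obtain ⟨ω, rfl⟩ := hx
      exact ⟨ω.reverse, D.wordProd_reverse ω⟩

lemma len_le (w : D.W) (ω : List (Fin D.n)) (h : D.wordProd ω = w) :
    D.len w ≤ ω.length := Nat.sInf_le ⟨ω, rfl, h⟩

lemma exists_reduced (w : D.W) : ∃ ω, D.IsReduced w ω := by
  obtain ⟨ω, hω⟩ := D.exists_word w
  have hne : {l | ∃ ω : List (Fin D.n), ω.length = l ∧ D.wordProd ω = w}.Nonempty :=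
    ⟨ω.length, ω, rfl, hω⟩
  obtain ⟨ρ, hρl, hρ⟩ := Nat.sInf_mem hne
  exact ⟨ρ, hρ, hρl⟩

lemma len_one : D.len 1 = 0 :=
  Nat.le_zero.mp (D.len_le 1 [] rfl)

lemma eq_one_of_len_eq_zero {w : D.W} (h : D.len w = 0) : w = 1 := by
  obtain ⟨ω, h1, h2⟩ := D.exists_reduced w
  rw [h, List.length_eq_zero_iff] at h2
  rw [← h1, h2]; rfl

lemma len_mul_le (u v : D.W) : D.len (u * v) ≤ D.len u + D.len v := by
  obtain ⟨ω₁, h1, l1⟩ := D.exists_reduced u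
  obtain ⟨ω₂, h2, l2⟩ := D.exists_reduced v
  have := D.len_le (u * v) (ω₁ ++ ω₂) (by rw [D.wordProd_append, h1, h2])
  simpa [l1, l2] using this

lemma len_inv (w : D.W) : D.len w⁻¹ = D.len w := by
  have key : ∀ u : D.W, D.len u⁻¹ ≤ D.len u := by
    intro u
    obtain ⟨ω, h1, l1⟩ := D.exists_reduced u
    have := D.len_le u⁻¹ ω.reverse (by rw [D.wordProd_reverse, h1])
    simpa [l1] using this
  refine le_antisymm (key w) ?_
  simpa using key w⁻¹

lemma len_s_le (i : Fin D.n) : D.len (D.s i) ≤ 1 :=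
  D.len_le _ [i] (D.wordProd_singleton i)

lemma len_mul_s_le (w : D.W) (i : Fin D.n) : D.len (w * D.s i) ≤ D.len w + 1 :=
  le_trans (D.len_mul_le w (D.s i)) (by have := D.len_s_le i; omega)

lemma len_le_len_mul_s (w : D.W) (i : Fin D.n) : D.len w ≤ D.len (w * D.s i) + 1 := by
  have := D.len_mul_s_le (w * D.s i) i
  rw [mul_assoc, D.s_sq, mul_one] at this
  exact this

/-! ### The sign character via determinants -/

def actL (w : D.W) : D.Λ →ₗ[ℤ] D.Λ :=
  (DistribMulAction.toAddMonoidHom D.Λ w).toIntLinearMap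

lemma actL_apply (w : D.W) (v : D.Λ) : D.actL w v = w • v := rfl

def eps (w : D.W) : ℤ := LinearMap.det (D.actL w)

lemma eps_mul (u v : D.W) : D.eps (u * v) = D.eps u * D.eps v := by
  have h : D.actL (u * v) = (D.actL u).comp (D.actL v) := by
    ext x; simp [actL, mul_smul]
  rw [eps, h, LinearMap.det_comp]; rfl

lemma eps_one : D.eps 1 = 1 := by
  have h : D.actL 1 = LinearMap.id := by ext x; simp [actL]
  rw [eps, h, LinearMap.det_id]

lemma eps_s (i : Fin D.n) : D.eps (D.s i) = -1 := by
  obtain ⟨b, j0, hb⟩ := D.basis_ext i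
  rw [eps, ← LinearMap.det_toMatrix b]
  set c : Fin (Module.finrank ℤ D.Λ) → ℤ :=
    fun k => (if k = j0 then 1 else 0) - D.scoroot i (b k) with hc
  have hM : LinearMap.toMatrix b b (D.actL (D.s i)) =
      (1 : Matrix (Fin (Module.finrank ℤ D.Λ)) (Fin (Module.finrank ℤ D.Λ)) ℤ).updateRow j0
        (∑ k, c k • (1 : Matrix (Fin (Module.finrank ℤ D.Λ)) (Fin (Module.finrank ℤ D.Λ)) ℤ) k) := by
    ext k l
    rw [LinearMap.toMatrix_apply]
    rw [actL_apply, D.s_act, ← hb]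
    have hrepr : b.repr (b l - D.scoroot i (b l) • b j0) k
        = (if l = k then 1 else 0) - D.scoroot i (b l) * (if j0 = k then 1 else 0) := by
      simp [Finsupp.single_apply, map_sub, map_zsmul]
    rw [hrepr]
    by_cases hk : k = j0
    · subst hk
      rw [Matrix.updateRow_self]
      simp only [Finset.sum_apply, Pi.smul_apply, smul_eq_mul, Matrix.one_apply]
      rw [Finset.sum_eq_single l]
      · simp [hc, eq_comm]
      · intro m _ hm; simp [Matrix.one_apply, hm]
      · simp
    · rw [Matrix.updateRow_ne hk]
      have : (if j0 = k then (1:ℤ) else 0) = 0 := by simp [Ne.symm hk]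
      rw [this, mul_zero, sub_zero, Matrix.one_apply]
      simp [eq_comm]
  rw [hM, Matrix.det_updateRow_sum]
  simp [hc, hb, D.cartan_diag, Matrix.det_one]

lemma eps_word (ω : List (Fin D.n)) : D.eps (D.wordProd ω) = (-1) ^ ω.length := by
  induction ω with
  | nil => simpa [wordProd_nil] using D.eps_one
  | cons i ω ih => rw [D.wordProd_cons, D.eps_mul, D.eps_s, ih, List.length_cons, pow_succ]; ring

lemma eps_len (w : D.W) : D.eps w = (-1) ^ D.len w := by
  obtain ⟨ω, h1, h2⟩ := D.exists_reduced w
  rw [← h2, ← h1, D.eps_word]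

lemma len_mul_s_ne (w : D.W) (i : Fin D.n) : D.len (w * D.s i) ≠ D.len w := by
  intro h
  have h1 : D.eps (w * D.s i) = D.eps w := by rw [D.eps_len, D.eps_len, h]
  rw [D.eps_mul, D.eps_s] at h1
  have h2 : D.eps w ≠ 0 := by
    rw [D.eps_len]; exact pow_ne_zero _ (by norm_num)
  omega

lemma len_mul_s (w : D.W) (i : Fin D.n) :
    D.len (w * D.s i) = D.len w + 1 ∨ D.len w = D.len (w * D.s i) + 1 := by
  have h1 := D.len_mul_s_le w i
  have h2 := D.len_le_len_mul_s w i
  have h3 := D.len_mul_s_ne w i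
  omega


/-! ### Roots basics -/

lemma sroot_mem_roots (i : Fin D.n) : D.sroot i ∈ D.roots := ⟨1, i, (one_smul _ _).symm⟩

lemma smul_mem_roots (w : D.W) {v : D.Λ} (hv : v ∈ D.roots) : w • v ∈ D.roots := by
  obtain ⟨u, i, rfl⟩ := hv
  exact ⟨w * u, i, (mul_smul w u _).symm⟩

lemma sroot_ne_zero (i : Fin D.n) : D.sroot i ≠ 0 := D.roots_indep.ne_zero i

lemma root_ne_zero {v : D.Λ} (hv : v ∈ D.roots) : v ≠ 0 := by
  obtain ⟨u, i, rfl⟩ := hv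
  intro h
  have : D.sroot i = 0 := by
    have := congrArg (fun x => u⁻¹ • x) h
    simpa [← mul_smul] using this
  exact D.sroot_ne_zero i this

lemma smul_zsmul (w : D.W) (k : ℤ) (v : D.Λ) : w • (k • v) = k • (w • v) :=
  map_zsmul (DistribMulAction.toAddMonoidHom D.Λ w) k v

lemma smul_nsmul' (w : D.W) (k : ℕ) (v : D.Λ) : w • (k • v) = k • (w • v) :=
  map_nsmul (DistribMulAction.toAddMonoidHom D.Λ w) k v

lemma smul_add' (w : D.W) (v v' : D.Λ) : w • (v + v') = w • v + w • v' := smul_add w v v'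

lemma mem_cone_iff (v : D.Λ) :
    v ∈ (AddSubmonoid.closure (Set.range D.sroot) : AddSubmonoid D.Λ) ↔
      ∃ f : Fin D.n → ℕ, v = ∑ m, f m • D.sroot m := by
  constructor
  · intro hv
    induction hv using AddSubmonoid.closure_induction with
    | mem x hx =>
        obtain ⟨m, rfl⟩ := hx
        refine ⟨fun k => if k = m then 1 else 0, ?_⟩
        rw [Finset.sum_eq_single m (fun k _ hk => by simp [hk]) (by simp)]
        simp
    | zero => exact ⟨0, by simp⟩
    | add x y _ _ hx hy =>
        obtain ⟨f, rfl⟩ := hx; obtain ⟨g, rfl⟩ := hy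
        exact ⟨f + g, by rw [← Finset.sum_add_distrib]; simp [add_smul]⟩
  · rintro ⟨f, rfl⟩
    refine AddSubmonoid.sum_mem _ (fun m _ => AddSubmonoid.nsmul_mem _ ?_ _)
    exact AddSubmonoid.subset_closure ⟨m, rfl⟩

lemma coeff_eq_zero {c : Fin D.n → ℤ} (h : ∑ m, c m • D.sroot m = 0) : ∀ m, c m = 0 :=
  Fintype.linearIndependent_iff.mp D.roots_indep c h

lemma coeff_unique {f g : Fin D.n → ℤ} (h : ∑ m, f m • D.sroot m = ∑ m, g m • D.sroot m) :
    ∀ m, f m = g m := by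
  have h0 : ∑ m, (f m - g m) • D.sroot m = 0 := by
    simp only [sub_smul, Finset.sum_sub_distrib, h, sub_self]
  intro m
  have := D.coeff_eq_zero h0 m
  omega

lemma nat_sum_eq_int_sum (f : Fin D.n → ℕ) :
    ∑ m, f m • D.sroot m = ∑ m, ((f m : ℤ)) • D.sroot m := by
  apply Finset.sum_congr rfl
  intro m _
  exact (natCast_zsmul (D.sroot m) (f m)).symm

lemma pos_neg_disjoint {v : D.Λ} (h1 : v ∈ D.posRoots) (h2 : v ∈ D.negRoots) : False := by
  obtain ⟨hr1, hc1⟩ := h1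
  obtain ⟨hr2, hc2⟩ := h2
  rw [D.mem_cone_iff] at hc1 hc2
  obtain ⟨f, hf⟩ := hc1
  obtain ⟨g, hg⟩ := hc2
  have hsum : ∑ m, ((f m : ℤ) + (g m : ℤ)) • D.sroot m = ∑ m, (0:ℤ) • D.sroot m := by
    simp only [add_smul, Finset.sum_add_distrib]
    rw [← D.nat_sum_eq_int_sum, ← D.nat_sum_eq_int_sum, ← hf, ← hg]
    simp
  have hz := D.coeff_unique hsum
  have hv0 : v = 0 := by
    rw [hf, D.nat_sum_eq_int_sum]
    apply Finset.sum_eq_zero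
    intro m _
    have := hz m
    have hfm : (f m : ℤ) = 0 := by omega
    rw [hfm, zero_smul]
  exact D.root_ne_zero ⟨hr1.choose, hr1.choose_spec.choose, hr1.choose_spec.choose_spec⟩ hv0

lemma sroot_mem_pos (i : Fin D.n) : D.sroot i ∈ D.posRoots :=
  ⟨⟨1, i, (one_smul _ _).symm⟩, AddSubmonoid.subset_closure ⟨i, rfl⟩⟩

lemma neg_mem_neg {v : D.Λ} (hv : v ∈ D.posRoots) : -v ∈ D.negRoots := by
  simpa [negRoots] using hv

lemma root_zsmul_simple {v : D.Λ} (hv : v ∈ D.roots) (i : Fin D.n) (k : ℤ)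
    (h : v = k • D.sroot i) : k = 1 ∨ k = -1 := by
  obtain ⟨w, j, hw⟩ := hv
  obtain ⟨b, l, hbl⟩ := D.basis_ext j
  have h2 : D.sroot j = k • (w⁻¹ • (D.sroot i)) := by
    have := congrArg (fun x => w⁻¹ • x) (hw.symm.trans h)
    simpa [← mul_smul, D.smul_zsmul] using this
  have h3 : (1 : ℤ) = k * b.repr (w⁻¹ • D.sroot i) l := by
    have := congrArg (fun x => b.repr x l) h2
    simpa [← hbl, map_zsmul] using this
  have hdvd : k ∣ 1 := Dvd.intro _ h3.symm
  exact Int.isUnit_iff.mp (isUnit_of_dvd_one hdvd)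


/-! ### Alternating words -/

def E (D : DemazureSetup R) : ℕ → D.W → D.W → D.W
  | 0, _, _ => 1
  | (k+1), a, b => D.E k b a * b

@[simp] lemma E_zero (a b : D.W) : D.E 0 a b = 1 := rfl

lemma E_succ (k : ℕ) (a b : D.W) : D.E (k+1) a b = D.E k b a * b := rfl

lemma E_two_step (k : ℕ) (a b : D.W) : D.E (k+2) a b = D.E k a b * (a * b) := by
  rw [E_succ, E_succ, mul_assoc]

lemma E_even (k : ℕ) (a b : D.W) : D.E (2*k) a b = (a*b)^k := by
  induction k with
  | zero => simp
  | succ k ih =>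
      have : 2 * (k+1) = 2*k + 2 := by ring
      rw [this, E_two_step, ih, pow_succ]

lemma E_odd (k : ℕ) (a b : D.W) : D.E (2*k+1) a b = (b*a)^k * b := by
  induction k with
  | zero => simp [E_succ]
  | succ k ih =>
      have : 2 * (k+1) + 1 = (2*k+1) + 2 := by ring
      rw [this, E_two_step, ih, pow_succ]
      group

lemma E_prepend (k : ℕ) (a b : D.W) :
    D.E (k+1) a b = (if Even k then b else a) * D.E k a b := by
  induction k generalizing a b with
  | zero => simp [E_succ]
  | succ k ih =>
      rw [D.E_succ (k+1) a b, ih b a, mul_assoc, ← D.E_succ k a b]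
      have : (if Even k then a else b) = if Even (k+1) then b else a := by
        rcases Nat.even_or_odd k with h | h
        · simp [h, Nat.even_add_one]
        · simp [Nat.not_even_iff_odd.mpr h, Nat.even_add_one]
      rw [this]

lemma len_E_le (k : ℕ) (i j : Fin D.n) : D.len (D.E k (D.s i) (D.s j)) ≤ k := by
  induction k generalizing i j with
  | zero => simp [D.len_one]
  | succ k ih =>
      rw [E_succ]
      calc D.len (D.E k (D.s j) (D.s i) * D.s j) ≤ D.len (D.E k (D.s j) (D.s i)) + 1 :=
            D.len_mul_s_le _ j
        _ ≤ k + 1 := by have := ih j i; omega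

/-! ### The coefficient sequence -/

def rseq (b c : ℤ) : ℕ → ℤ
  | 0 => 0
  | 1 => 1
  | (k+2) => (if Even k then c else b) * rseq b c (k+1) - rseq b c k

@[simp] lemma rseq_zero (b c : ℤ) : rseq b c 0 = 0 := rfl
@[simp] lemma rseq_one (b c : ℤ) : rseq b c 1 = 1 := rfl
lemma rseq_step (b c : ℤ) (k : ℕ) :
    rseq b c (k+2) = (if Even k then c else b) * rseq b c (k+1) - rseq b c k := rfl

lemma rseq_two : rseq b c 2 = c := by simp [rseq_step]
lemma rseq_three : rseq b c 3 = b * c - 1 := by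
  rw [rseq_step, rseq_two]; simp [Nat.even_add_one]
lemma rseq_four : rseq b c 4 = c * (b*c - 2) := by
  rw [rseq_step, rseq_three, rseq_two]; ring_nf; simp; ring
lemma rseq_five : rseq b c 5 = (b*c)*(b*c) - 3*(b*c) + 1 := by
  rw [rseq_step, rseq_four, rseq_three]
  have : ¬ Even 3 := by decide
  simp [this]; ring

lemma rseq_two_step (b c : ℤ) (k : ℕ) :
    rseq b c (k+4) = (b*c - 2) * rseq b c (k+2) - rseq b c k := by
  rcases Nat.even_or_odd k with h | h
  · have h0 : Even k := h
    have h1 : Even (k+2) := by rw [Nat.even_iff] at *; omega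
    have h2 : ¬ Even (k+1) := by rw [Nat.even_iff] at *; omega
    rw [rseq_step b c (k+2), rseq_step b c (k+1), rseq_step b c k]
    rw [if_pos h0, if_pos h1, if_neg h2]
    ring
  · have h0 : ¬ Even k := by rw [Nat.even_iff] at *; rw [Nat.odd_iff] at h; omega
    have h1 : ¬ Even (k+2) := by rw [Nat.even_iff] at *; omega
    have h2 : Even (k+1) := by rw [Nat.even_iff] at *; omega
    rw [rseq_step b c (k+2), rseq_step b c (k+1), rseq_step b c k]
    rw [if_neg h0, if_neg h1, if_pos h2]
    ring

lemma rseq_nonneg_of_ge_four {b c : ℤ} (hb : 0 ≤ b) (hc : 0 ≤ c) (h4 : 4 ≤ b * c) :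
    ∀ k, 0 ≤ rseq b c k ∧ rseq b c k ≤ rseq b c (k+2) := by
  have key : ∀ k, (0 ≤ rseq b c k ∧ rseq b c k ≤ rseq b c (k+2)) ∧
      (0 ≤ rseq b c (k+1) ∧ rseq b c (k+1) ≤ rseq b c (k+3)) := by
    intro k
    induction k with
    | zero =>
        refine ⟨⟨le_refl 0, ?_⟩, ⟨by norm_num, ?_⟩⟩
        · show rseq b c 0 ≤ rseq b c 2
          rw [rseq_two]; simpa using hc
        · show rseq b c 1 ≤ rseq b c 3
          rw [rseq_three, rseq_one]; nlinarith
    | succ k ih =>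
        refine ⟨ih.2, ?_, ?_⟩
        · exact le_trans ih.1.1 ih.1.2
        · have h2s := rseq_two_step b c k
          nlinarith [ih.1.1, ih.1.2]
  exact fun k => (key k).1


/-! ### Cartan integers -/

def rco (D : DemazureSetup R) (i j : Fin D.n) : ℤ := -(D.scoroot i (D.sroot j))

lemma rco_nonneg {i j : Fin D.n} (hij : i ≠ j) : 0 ≤ D.rco i j := by
  have := D.cartan_off i j hij; simp [rco]; omega

lemma rco_self (i : Fin D.n) : D.rco i i = -2 := by simp [rco, D.cartan_diag]

lemma rco_zero_iff (i j : Fin D.n) : D.rco i j = 0 ↔ D.rco j i = 0 := by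
  simp only [rco, neg_eq_zero]
  exact D.cartan_zero i j

/-! ### Reflection action on combinations -/

lemma smul_combo (i j : Fin D.n) (lam : D.Λ) (p q : ℤ) :
    D.s i • (lam + p • D.sroot i + q • D.sroot j) =
      lam + (D.rco i j * q - p - D.scoroot i lam) • D.sroot i + q • D.sroot j := by
  rw [D.s_act]
  have h : D.scoroot i (lam + p • D.sroot i + q • D.sroot j)
      = D.scoroot i lam + 2*p - D.rco i j * q := by
    simp only [map_add, map_zsmul, D.cartan_diag, rco, smul_eq_mul]
    ring
  rw [h]
  module

lemma smul_combo' (i j : Fin D.n) (lam : D.Λ) (p q : ℤ) :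
    D.s j • (lam + p • D.sroot i + q • D.sroot j) =
      lam + p • D.sroot i + (D.rco j i * p - q - D.scoroot j lam) • D.sroot j := by
  rw [D.s_act]
  have h : D.scoroot j (lam + p • D.sroot i + q • D.sroot j)
      = D.scoroot j lam + 2*q - D.rco j i * p := by
    simp only [map_add, map_zsmul, D.cartan_diag, rco, smul_eq_mul]
    ring
  rw [h]
  module

lemma smul_combo2 (i j : Fin D.n) (lam : D.Λ) (p q : ℤ) :
    (D.s i * D.s j) • (lam + p • D.sroot i + q • D.sroot j) =
      lam + (D.rco i j * (D.rco j i * p - q - D.scoroot j lam) - p - D.scoroot i lam) • D.sroot i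
          + (D.rco j i * p - q - D.scoroot j lam) • D.sroot j := by
  rw [mul_smul, D.smul_combo', D.smul_combo]

/-! ### Braid relations in the small rank-two cases -/

lemma braid_swap (a b : D.W) (ha : a * a = 1) (hb : b * b = 1) (m : ℕ)
    (h : (a * b)^m = 1) : (b * a)^m = 1 := by
  have ha' : a⁻¹ = a := by rw [inv_eq_iff_mul_eq_one, ha]
  have hb' : b⁻¹ = b := by rw [inv_eq_iff_mul_eq_one, hb]
  have : ((a*b)^m)⁻¹ = 1 := by rw [h]; simp
  rw [← this, ← inv_pow, mul_inv_rev, ha', hb']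

lemma braid2 (i j : Fin D.n) (hb : D.rco i j = 0) (hc : D.rco j i = 0) :
    (D.s i * D.s j)^2 = 1 := by
  apply D.act_faithful
  intro lam
  have key : ∀ p q : ℤ, (D.s i * D.s j) • (lam + p • D.sroot i + q • D.sroot j)
      = lam + (D.rco i j * (D.rco j i * p - q - D.scoroot j lam) - p - D.scoroot i lam) • D.sroot i
          + (D.rco j i * p - q - D.scoroot j lam) • D.sroot j := D.smul_combo2 i j lam
  have e0 : lam = lam + (0:ℤ) • D.sroot i + (0:ℤ) • D.sroot j := by simp
  have expand : (D.s i * D.s j)^2 • lam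
      = (D.s i * D.s j) • ((D.s i * D.s j) • lam) := by
    rw [pow_two, mul_smul]
  rw [expand]
  conv_lhs => rw [e0]
  rw [key, key, hb, hc]
  module

lemma braid3 (i j : Fin D.n) (hb : D.rco i j = 1) (hc : D.rco j i = 1) :
    (D.s i * D.s j)^3 = 1 := by
  apply D.act_faithful
  intro lam
  have key : ∀ p q : ℤ, (D.s i * D.s j) • (lam + p • D.sroot i + q • D.sroot j)
      = lam + (D.rco i j * (D.rco j i * p - q - D.scoroot j lam) - p - D.scoroot i lam) • D.sroot i
          + (D.rco j i * p - q - D.scoroot j lam) • D.sroot j := D.smul_combo2 i j lam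
  have e0 : lam = lam + (0:ℤ) • D.sroot i + (0:ℤ) • D.sroot j := by simp
  have expand : (D.s i * D.s j)^3 • lam
      = (D.s i * D.s j) • ((D.s i * D.s j) • ((D.s i * D.s j) • lam)) := by
    rw [pow_succ, pow_two, mul_smul, mul_smul]
  rw [expand]
  conv_lhs => rw [e0]
  rw [key, key, key, hb, hc]
  module

lemma braid4 (i j : Fin D.n) (hb : D.rco i j = 1) (hc : D.rco j i = 2) :
    (D.s i * D.s j)^4 = 1 := by
  apply D.act_faithful
  intro lam
  have key : ∀ p q : ℤ, (D.s i * D.s j) • (lam + p • D.sroot i + q • D.sroot j)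
      = lam + (D.rco i j * (D.rco j i * p - q - D.scoroot j lam) - p - D.scoroot i lam) • D.sroot i
          + (D.rco j i * p - q - D.scoroot j lam) • D.sroot j := D.smul_combo2 i j lam
  have e0 : lam = lam + (0:ℤ) • D.sroot i + (0:ℤ) • D.sroot j := by simp
  have expand : (D.s i * D.s j)^4 • lam
      = (D.s i * D.s j) • ((D.s i * D.s j) • ((D.s i * D.s j) • ((D.s i * D.s j) • lam))) := by
    rw [pow_succ, pow_succ, pow_two, mul_smul, mul_smul, mul_smul]
  rw [expand]
  conv_lhs => rw [e0]
  rw [key, key, key, key, hb, hc]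
  module

lemma braid6 (i j : Fin D.n) (hb : D.rco i j = 1) (hc : D.rco j i = 3) :
    (D.s i * D.s j)^6 = 1 := by
  apply D.act_faithful
  intro lam
  have key : ∀ p q : ℤ, (D.s i * D.s j) • (lam + p • D.sroot i + q • D.sroot j)
      = lam + (D.rco i j * (D.rco j i * p - q - D.scoroot j lam) - p - D.scoroot i lam) • D.sroot i
          + (D.rco j i * p - q - D.scoroot j lam) • D.sroot j := D.smul_combo2 i j lam
  have e0 : lam = lam + (0:ℤ) • D.sroot i + (0:ℤ) • D.sroot j := by simp
  have expand : (D.s i * D.s j)^6 • lam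
      = (D.s i * D.s j) • ((D.s i * D.s j) • ((D.s i * D.s j) •
          ((D.s i * D.s j) • ((D.s i * D.s j) • ((D.s i * D.s j) • lam))))) := by
    rw [pow_succ, pow_succ, pow_succ, pow_succ, pow_two,
      mul_smul, mul_smul, mul_smul, mul_smul, mul_smul]
  rw [expand]
  conv_lhs => rw [e0]
  rw [key, key, key, key, key, key, hb, hc]
  module


/-! ### Action of alternating words on a simple root -/

lemma s_smul_sroot (i j : Fin D.n) :
    D.s j • D.sroot i = D.sroot i + D.rco j i • D.sroot j := by
  rw [D.s_act, rco, sub_eq_add_neg, ← neg_zsmul]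

lemma E_smul (i j : Fin D.n) : ∀ k : ℕ,
    D.E k (D.s i) (D.s j) • D.sroot i =
      (if Even k then
        rseq (D.rco i j) (D.rco j i) (k+1) • D.sroot i + rseq (D.rco i j) (D.rco j i) k • D.sroot j
       else
        rseq (D.rco i j) (D.rco j i) (k+1) • D.sroot j + rseq (D.rco i j) (D.rco j i) k • D.sroot i) := by
  intro k
  induction k with
  | zero => simp
  | succ k ih =>
      rw [D.E_prepend, mul_smul, ih]
      rcases Nat.even_or_odd k with h | h
      · have h1 : ¬ Even (k+1) := by
          rw [Nat.even_iff] at *; omega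
        rw [if_pos h, if_pos h, if_neg h1]
        rw [smul_add, D.smul_zsmul, D.smul_zsmul, D.s_smul_sroot i j, D.s_smul_sroot j j,
          D.rco_self, rseq_step, if_pos h]
        module
      · have h0 : ¬ Even k := by
          rw [Nat.even_iff] at *; rw [Nat.odd_iff] at h; omega
        have h1 : Even (k+1) := by
          rw [Nat.even_iff] at *; rw [Nat.odd_iff] at h; omega
        rw [if_neg h0, if_neg h0, if_pos h1]
        rw [smul_add, D.smul_zsmul, D.smul_zsmul, D.s_smul_sroot j i, D.s_smul_sroot i i,
          D.rco_self, rseq_step, if_neg h0]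
        module

/-! ### Length bounds from braid relations -/

lemma E_add_two_mul (x y : D.W) (J m : ℕ) :
    D.E (J + 2*m) x y = D.E J x y * (x*y)^m := by
  induction m with
  | zero => simp
  | succ m ih =>
      have : J + 2*(m+1) = (J + 2*m) + 2 := by ring
      rw [this, D.E_two_step, ih, pow_succ, mul_assoc]

lemma len_E_lt (i j : Fin D.n) (m : ℕ) (hm : 1 ≤ m)
    (hbr : (D.s i * D.s j)^m = 1) :
    ∀ J, m + 1 ≤ J → D.len (D.E J (D.s i) (D.s j)) < J := by
  have hbr' : (D.s j * D.s i)^m = 1 := D.braid_swap _ _ (D.s_sq i) (D.s_sq j) m hbr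
  have main : ∀ J, m + 1 ≤ J → J ≤ 2*m → D.len (D.E J (D.s i) (D.s j)) < J := by
    intro J hJ1 hJ2
    rcases Nat.even_or_odd J with he | ho
    · obtain ⟨a, ha⟩ := he
      have haJ : J = 2*a := by omega
      have ham : a ≤ m := by omega
      have key : D.E J (D.s i) (D.s j) = D.E (2*(m-a)) (D.s j) (D.s i) := by
        rw [haJ, D.E_even, D.E_even]
        have : (D.s i * D.s j)^a * (D.s i * D.s j)^(m-a) = 1 := by
          rw [← pow_add]
          have : a + (m - a) = m := by omega
          rw [this, hbr]
        have h2 : (D.s i * D.s j)^a = ((D.s i * D.s j)^(m-a))⁻¹ := by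
          rw [eq_inv_iff_mul_eq_one]; exact this
        rw [h2, ← inv_pow, mul_inv_rev, D.s_inv, D.s_inv]
      rw [key]
      have := D.len_E_le (2*(m-a)) j i
      omega
    · obtain ⟨a, ha⟩ := ho
      have haJ : J = 2*a + 1 := by omega
      have ham : a + 1 ≤ m := by omega
      have key : D.E J (D.s i) (D.s j) = D.E (2*(m-a-1)+1) (D.s j) (D.s i) := by
        rw [haJ, D.E_odd, D.E_odd]
        have h1 : (D.s j * D.s i)^a * (D.s j * D.s i)^(m-a) = 1 := by
          rw [← pow_add]
          have : a + (m - a) = m := by omega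
          rw [this, hbr']
        have h2 : (D.s j * D.s i)^a = ((D.s j * D.s i)^(m-a))⁻¹ := by
          rw [eq_inv_iff_mul_eq_one]; exact h1
        have h3 : m - a = (m - a - 1) + 1 := by omega
        rw [h2, ← inv_pow, mul_inv_rev, D.s_inv, D.s_inv, h3, pow_succ]
        rw [mul_assoc, mul_assoc, D.s_sq, mul_one]
        simp
      rw [key]
      have := D.len_E_le (2*(m-a-1)+1) j i
      omega
  intro J hJ
  by_cases hJ2 : J ≤ 2*m
  · exact main J hJ hJ2
  · have hJ' : J = (J - 2*m) + 2*m := by omega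
    have h5 := D.E_add_two_mul (D.s i) (D.s j) (J - 2*m) m
    rw [← hJ'] at h5
    rw [h5, hbr, mul_one]
    have := D.len_E_le (J - 2*m) i j
    omega

/-! ### The rank-two positivity lemma -/

lemma rank2 (i j : Fin D.n) (hij : i ≠ j) (k : ℕ)
    (hk1 : D.len (D.E k (D.s i) (D.s j) * D.s i) = k + 1) :
    ∃ p q : ℕ, D.E k (D.s i) (D.s j) • D.sroot i =
      (p : ℤ) • D.sroot i + (q : ℤ) • D.sroot j := by
  set b := D.rco i j with hbdef
  set c := D.rco j i with hcdef
  have hb0 : 0 ≤ b := D.rco_nonneg hij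
  have hc0 : 0 ≤ c := D.rco_nonneg (Ne.symm hij)
  -- first, nonnegativity of the two relevant coefficients
  have hnn : 0 ≤ rseq b c k ∧ 0 ≤ rseq b c (k+1) := by
    by_cases h4 : 4 ≤ b * c
    · exact ⟨(rseq_nonneg_of_ge_four hb0 hc0 h4 k).1,
        (rseq_nonneg_of_ge_four hb0 hc0 h4 (k+1)).1⟩
    · -- small cases: get the braid bound
      have hbc3 : b * c ≤ 3 := by omega
      have hbc0 : 0 ≤ b * c := mul_nonneg hb0 hc0
      -- determine m and the braid relation
      have hEk1 : D.len (D.E (k+1) (D.s j) (D.s i)) = k + 1 := by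
        rw [D.E_succ]; exact hk1
      have bound : ∀ m, 1 ≤ m → (D.s j * D.s i)^m = 1 → k + 1 ≤ m := by
        intro m hm hbr
        by_contra hcon
        have := D.len_E_lt j i m hm hbr (k+1) (by omega)
        omega
      interval_cases hbc : b * c
      · -- b*c = 0
        have hb' : b = 0 ∧ c = 0 := by
          rcases mul_eq_zero.mp hbc with h | h
          · exact ⟨h, (D.rco_zero_iff i j).mp h⟩
          · exact ⟨(D.rco_zero_iff j i).mp h, h⟩
        have hbr := D.braid2 j i (by rw [← hcdef, hb'.2]) (by rw [← hbdef, hb'.1])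
        have hkm := bound 2 (by norm_num) hbr
        have h2 : rseq b c 2 = c := rseq_two
        rcases (by omega : k = 0 ∨ k = 1) with rfl | rfl
        · simp
        · constructor
          · simp
          · rw [h2]; exact hc0
      · -- b*c = 1
        have hb1 : b = 1 ∧ c = 1 := by
          rcases Int.mul_eq_one_iff_eq_one_or_neg_one.mp hbc with ⟨h1, h2⟩ | ⟨h1, h2⟩
          · exact ⟨h1, h2⟩
          · exfalso; omega
        have hbr := D.braid3 j i (by rw [← hcdef, hb1.2]) (by rw [← hbdef, hb1.1])
        have hkm := bound 3 (by norm_num) hbr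
        have h2 : rseq b c 2 = c := rseq_two
        have h3 : rseq b c 3 = b*c - 1 := rseq_three
        rcases (by omega : k = 0 ∨ k = 1 ∨ k = 2) with rfl | rfl | rfl
        · simp
        · refine ⟨by simp, ?_⟩; rw [h2]; exact hc0
        · refine ⟨by rw [h2]; exact hc0, ?_⟩; rw [h3, hbc]; norm_num
      · -- b*c = 2
        have hb2 : (b = 1 ∧ c = 2) ∨ (b = 2 ∧ c = 1) := by
          have hb1 : 1 ≤ b := by nlinarith
          have hc1 : 1 ≤ c := by nlinarith
          have hble : b ≤ 2 := by nlinarith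
          interval_cases b
          · left; constructor; rfl; omega
          · right; constructor; rfl; omega
        have hbr : (D.s j * D.s i)^4 = 1 := by
          rcases hb2 with ⟨h1, h2⟩ | ⟨h1, h2⟩
          · exact D.braid_swap _ _ (D.s_sq i) (D.s_sq j) 4
              (D.braid4 i j (by rw [← hbdef]; exact h1) (by rw [← hcdef]; exact h2))
          · exact D.braid4 j i (by rw [← hcdef]; exact h2) (by rw [← hbdef]; exact h1)
        have hkm := bound 4 (by norm_num) hbr
        have h2 : rseq b c 2 = c := rseq_two
        have h3 : rseq b c 3 = b*c - 1 := rseq_three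
        have h4' : rseq b c 4 = c*(b*c-2) := rseq_four
        rcases (by omega : k = 0 ∨ k = 1 ∨ k = 2 ∨ k = 3) with rfl | rfl | rfl | rfl
        · simp
        · refine ⟨by simp, ?_⟩; rw [h2]; exact hc0
        · refine ⟨by rw [h2]; exact hc0, ?_⟩; rw [h3, hbc]; norm_num
        · refine ⟨by rw [h3, hbc]; norm_num, ?_⟩; rw [h4', hbc]; norm_num
      · -- b*c = 3
        have hb3 : (b = 1 ∧ c = 3) ∨ (b = 3 ∧ c = 1) := by
          have hb1 : 1 ≤ b := by nlinarith
          have hc1 : 1 ≤ c := by nlinarith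
          have hble : b ≤ 3 := by nlinarith
          interval_cases b
          · left; constructor; rfl; omega
          · exfalso; omega
          · right; constructor; rfl; omega
        have hbr : (D.s j * D.s i)^6 = 1 := by
          rcases hb3 with ⟨h1, h2⟩ | ⟨h1, h2⟩
          · exact D.braid_swap _ _ (D.s_sq i) (D.s_sq j) 6
              (D.braid6 i j (by rw [← hbdef]; exact h1) (by rw [← hcdef]; exact h2))
          · exact D.braid6 j i (by rw [← hcdef]; exact h2) (by rw [← hbdef]; exact h1)
        have hkm := bound 6 (by norm_num) hbr
        have h2 : rseq b c 2 = c := rseq_two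
        have h3 : rseq b c 3 = b*c - 1 := rseq_three
        have h4' : rseq b c 4 = c*(b*c-2) := rseq_four
        have h5 : rseq b c 5 = (b*c)*(b*c) - 3*(b*c) + 1 := rseq_five
        have h6 : rseq b c 6 = (if Even 4 then c else b) * rseq b c 5 - rseq b c 4 :=
          rseq_step b c 4
        have h6' : rseq b c 6 = c * ((b*c)*(b*c) - 3*(b*c) + 1) - c*(b*c-2) := by
          rw [h6, if_pos (by decide : Even 4), h5, h4']
        rcases (by omega : k = 0 ∨ k = 1 ∨ k = 2 ∨ k = 3 ∨ k = 4 ∨ k = 5)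
          with rfl | rfl | rfl | rfl | rfl | rfl
        · simp
        · refine ⟨by simp, ?_⟩; rw [h2]; exact hc0
        · refine ⟨by rw [h2]; exact hc0, ?_⟩; rw [h3, hbc]; norm_num
        · refine ⟨by rw [h3, hbc]; norm_num, ?_⟩; rw [h4', hbc]; simpa using hc0
        · refine ⟨by rw [h4', hbc]; simpa using hc0, ?_⟩; rw [h5, hbc]; norm_num
        · refine ⟨by rw [h5, hbc]; norm_num, ?_⟩
          have h6'' : rseq b c 6 = 0 := by
            rw [h6']; linear_combination (c*(b*c - 1)) * hbc
          rw [h6'']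
  -- now convert to natural numbers
  obtain ⟨hk0, hk10⟩ := hnn
  have hE := D.E_smul i j k
  rcases Nat.even_or_odd k with h | h
  · rw [if_pos h] at hE
    refine ⟨(rseq b c (k+1)).toNat, (rseq b c k).toNat, ?_⟩
    rw [Int.toNat_of_nonneg hk10, Int.toNat_of_nonneg hk0]
    exact hE
  · rw [if_neg (by rw [Nat.even_iff]; rw [Nat.odd_iff] at h; omega)] at hE
    refine ⟨(rseq b c k).toNat, (rseq b c (k+1)).toNat, ?_⟩
    rw [Int.toNat_of_nonneg hk10, Int.toNat_of_nonneg hk0]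
    rw [hE]; abel


/-! ### Stripping alternating suffixes -/

lemma alt_strip : ∀ (N : ℕ) (w : D.W) (ti tj : Fin D.n),
    D.len w ≤ N → D.len (w * D.s tj) < D.len w →
    ∃ (v : D.W) (k : ℕ), 1 ≤ k ∧ w = v * D.E k (D.s ti) (D.s tj) ∧
      D.len w = D.len v + k ∧ D.len v < D.len (v * D.s ti) ∧
      D.len v < D.len (v * D.s tj) := by
  intro N
  induction N with
  | zero => intro w ti tj hw hd; omega
  | succ N ih =>
      intro w ti tj hw hd
      have hlw1' : D.len (w * D.s tj) + 1 = D.len w := by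
        rcases D.len_mul_s w tj with h | h <;> omega
      set w1 := w * D.s tj with hw1
      have hlw1 : D.len w1 + 1 = D.len w := hlw1'
      have hw1w : w1 * D.s tj = w := by rw [hw1, mul_assoc, D.s_sq, mul_one]
      by_cases hcase : D.len w1 < D.len (w1 * D.s ti)
      · refine ⟨w1, 1, le_refl 1, ?_, by omega, hcase, ?_⟩
        · rw [D.E_succ, E_zero, one_mul, hw1w]
        · rw [hw1w]; omega
      · have hlt : D.len (w1 * D.s ti) < D.len w1 := by
          rcases D.len_mul_s w1 ti with h | h <;> omega
        obtain ⟨v, k, hk1, heq, hlen, hvj, hvi⟩ := ih w1 tj ti (by omega) hlt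
        refine ⟨v, k+1, by omega, ?_, by omega, hvi, hvj⟩
        rw [← hw1w, heq, mul_assoc, ← D.E_succ]

/-! ### Positivity -/

lemma s_smul_self (i : Fin D.n) : D.s i • D.sroot i = -(D.sroot i) := by
  rw [D.s_act, D.cartan_diag]
  module

theorem pos_of_len_succ : ∀ (w : D.W) (i : Fin D.n),
    D.len w < D.len (w * D.s i) → w • D.sroot i ∈ D.posRoots := by
  have main : ∀ (N : ℕ) (w : D.W) (i : Fin D.n), D.len w ≤ N →
      D.len w < D.len (w * D.s i) → w • D.sroot i ∈ D.posRoots := by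
    intro N
    induction N with
    | zero =>
        intro w i hw _
        have : w = 1 := D.eq_one_of_len_eq_zero (by omega)
        rw [this, one_smul]
        exact D.sroot_mem_pos i
    | succ N ih =>
        intro w i hw hlt
        by_cases hw0 : D.len w = 0
        · have : w = 1 := D.eq_one_of_len_eq_zero hw0
          rw [this, one_smul]
          exact D.sroot_mem_pos i
        · obtain ⟨ω, hωp, hωl⟩ := D.exists_reduced w
          rcases ω.eq_nil_or_concat with rfl | ⟨ω', t, rfl⟩
          · exfalso; apply hw0; rw [← hωl]; rfl
          · rw [List.concat_eq_append] at hωp hωl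
            set w1 := D.wordProd ω' with hw1
            have hww1 : w = w1 * D.s t := by
              rw [← hωp, hw1, D.wordProd_append, D.wordProd_singleton]
            have hlenw1 : D.len w1 + 1 = D.len w := by
              have h1 : D.len w1 ≤ ω'.length := D.len_le _ _ rfl
              have h2 : ω'.length + 1 = D.len w := by
                rw [← hωl]; simp
              have h3 : D.len w ≤ D.len w1 + 1 := by
                have := D.len_mul_s_le w1 t
                rw [← hww1] at this
                omega
              omega
            have hwst : D.len (w * D.s t) < D.len w := by
              have : w * D.s t = w1 := by rw [hww1, mul_assoc, D.s_sq, mul_one]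
              rw [this]; omega
            have hsne : D.s i ≠ D.s t := by
              intro h
              rw [← h] at hwst
              omega
            have hine : i ≠ t := fun h => hsne (by rw [h])
            obtain ⟨v, k, hk1, heq, hlen, hvi, hvt⟩ :=
              D.alt_strip (N+1) w i t hw hwst
            -- length of the alternating part
            have hEk : D.len (D.E k (D.s i) (D.s t)) = k := by
              have h1 : D.len (D.E k (D.s i) (D.s t)) ≤ k := D.len_E_le k i t
              have h2 : D.len w ≤ D.len v + D.len (D.E k (D.s i) (D.s t)) := by
                rw [heq]; exact D.len_mul_le _ _
              omega
            have hEk1 : D.len (D.E k (D.s i) (D.s t) * D.s i) = k + 1 := by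
              have h1 : D.len (D.E k (D.s i) (D.s t) * D.s i) ≤ k + 1 := by
                have := D.len_mul_s_le (D.E k (D.s i) (D.s t)) i
                omega
              have h2 : D.len (w * D.s i) ≤ D.len v + D.len (D.E k (D.s i) (D.s t) * D.s i) := by
                rw [heq, mul_assoc]; exact D.len_mul_le _ _
              have h3 : D.len w + 1 ≤ D.len (w * D.s i) := hlt
              omega
            obtain ⟨p, q, hpq⟩ := D.rank2 i t hine k hEk1
            have hwsmul : w • D.sroot i =
                (p : ℤ) • (v • D.sroot i) + (q : ℤ) • (v • D.sroot t) := by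
              rw [heq, mul_smul, hpq, D.smul_add', D.smul_zsmul, D.smul_zsmul]
            have hvposi : v • D.sroot i ∈ D.posRoots := ih v i (by omega) hvi
            have hvpost : v • D.sroot t ∈ D.posRoots := ih v t (by omega) hvt
            constructor
            · exact ⟨w, i, rfl⟩
            · rw [hwsmul]
              have h1 : (p : ℤ) • (v • D.sroot i) = p • (v • D.sroot i) :=
                natCast_zsmul _ _
              have h2 : (q : ℤ) • (v • D.sroot t) = q • (v • D.sroot t) :=
                natCast_zsmul _ _
              rw [h1, h2]
              exact AddSubmonoid.add_mem _ (AddSubmonoid.nsmul_mem _ hvposi.2 _)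
                (AddSubmonoid.nsmul_mem _ hvpost.2 _)
  intro w i h
  exact main (D.len w) w i (le_refl _) h

theorem neg_of_len_pred (w : D.W) (i : Fin D.n)
    (h : D.len (w * D.s i) < D.len w) : w • D.sroot i ∈ D.negRoots := by
  set w' := w * D.s i with hw'
  have hw : w = w' * D.s i := by rw [hw', mul_assoc, D.s_sq, mul_one]
  have hpos : w' • D.sroot i ∈ D.posRoots := by
    apply D.pos_of_len_succ
    rw [← hw]; omega
  have : w • D.sroot i = -(w' • D.sroot i) := by
    rw [hw, mul_smul, D.s_smul_self, smul_neg]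
  rw [this]
  simpa [negRoots] using hpos

theorem root_pos_or_neg {v : D.Λ} (hv : v ∈ D.roots) :
    v ∈ D.posRoots ∨ v ∈ D.negRoots := by
  obtain ⟨w, i, rfl⟩ := hv
  rcases D.len_mul_s w i with h | h
  · left; exact D.pos_of_len_succ w i (by omega)
  · right; exact D.neg_of_len_pred w i (by omega)


/-! ### Simple reflections permute the other positive roots -/

lemma s_smul_pos {i : Fin D.n} {v : D.Λ} (hv : v ∈ D.posRoots) (hne : v ≠ D.sroot i) :
    D.s i • v ∈ D.posRoots := by
  obtain ⟨hroot, hcone⟩ := hv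
  have hrootv : v ∈ D.roots := hroot
  obtain ⟨f, hf⟩ := (D.mem_cone_iff v).mp hcone
  have hsroot : D.s i • v ∈ D.roots := D.smul_mem_roots _ hrootv
  by_cases hA : ∃ m, m ≠ i ∧ f m ≠ 0
  · rcases D.root_pos_or_neg hsroot with h | h
    · exact h
    · exfalso
      obtain ⟨m, hmi, hfm⟩ := hA
      have h2 : -(D.s i • v) ∈ D.posRoots := h
      obtain ⟨g, hg⟩ := (D.mem_cone_iff _).mp h2.2
      have hFsum : ∑ m', ((f m' : ℤ) - (if m' = i then D.scoroot i v else 0)) • D.sroot m'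
          = D.s i • v := by
        rw [D.s_act]
        have h1 : ∑ m', (if m' = i then D.scoroot i v else 0) • D.sroot m'
            = D.scoroot i v • D.sroot i := by
          rw [Finset.sum_eq_single i (fun m' _ hm' => by simp [hm']) (by simp)]
          simp
        simp only [sub_smul, Finset.sum_sub_distrib]
        rw [h1, ← D.nat_sum_eq_int_sum, ← hf]
      have hGsum : ∑ m', (-(g m' : ℤ)) • D.sroot m' = D.s i • v := by
        have hns : ∑ m', (-(g m' : ℤ)) • D.sroot m' = -∑ m', ((g m' : ℤ)) • D.sroot m' := by
          simp [neg_smul]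
        rw [hns, ← D.nat_sum_eq_int_sum, ← hg, neg_neg]
      have := D.coeff_unique (hFsum.trans hGsum.symm) m
      rw [if_neg hmi] at this
      omega
  · push_neg at hA
    exfalso
    have hvfi : v = (f i) • D.sroot i := by
      rw [hf, Finset.sum_eq_single i (fun m' _ hm' => by rw [hA m' hm']; simp) (by simp)]
    have hk := D.root_zsmul_simple hrootv i (f i : ℤ)
      (by rw [natCast_zsmul]; exact hvfi)
    have hfi1 : f i = 1 := by omega
    apply hne
    rw [hvfi, hfi1, one_smul]

/-! ### Inversion sets -/

lemma invSet_one : D.invSet 1 = ∅ := by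
  ext v
  simp only [invSet, Set.mem_setOf_eq, Set.mem_empty_iff_false, iff_false]
  rintro ⟨h1, h2⟩
  rw [inv_one, one_smul] at h2
  exact D.pos_neg_disjoint h1 h2

lemma smul_smul_s (i : Fin D.n) (v : D.Λ) : D.s i • (D.s i • v) = v := by
  rw [← mul_smul, D.s_sq, one_smul]

lemma invSet_succ (i : Fin D.n) (w₂ : D.W) (hlen : D.len (D.s i * w₂) = D.len w₂ + 1) :
    D.invSet (D.s i * w₂) = insert (D.sroot i) ((D.s i • ·) '' D.invSet w₂) ∧
    D.sroot i ∉ (D.s i • ·) '' D.invSet w₂ := by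
  have winv : (D.s i * w₂)⁻¹ = w₂⁻¹ * D.s i := by rw [mul_inv_rev, D.s_inv]
  have hw2pos : w₂⁻¹ • D.sroot i ∈ D.posRoots := by
    apply D.pos_of_len_succ
    have h1 : w₂⁻¹ * D.s i = (D.s i * w₂)⁻¹ := winv.symm
    rw [h1, D.len_inv, D.len_inv, hlen]
    omega
  have hnotin : D.sroot i ∉ (D.s i • ·) '' D.invSet w₂ := by
    rintro ⟨u, ⟨hu1, hu2⟩, hu3⟩
    have : u = -(D.sroot i) := by
      have h5 : u = D.s i • D.sroot i := by rw [← hu3, D.smul_smul_s]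
      rw [D.s_smul_self] at h5
      exact h5
    apply D.pos_neg_disjoint hu1
    rw [this]
    simpa [negRoots] using D.sroot_mem_pos i
  refine ⟨?_, hnotin⟩
  ext v
  constructor
  · rintro ⟨hv1, hv2⟩
    by_cases hvi : v = D.sroot i
    · exact Set.mem_insert_iff.mpr (Or.inl hvi)
    · refine Set.mem_insert_iff.mpr (Or.inr ⟨D.s i • v, ⟨?_, ?_⟩, D.smul_smul_s i v⟩)
      · exact D.s_smul_pos ⟨hv1.1, hv1.2⟩ hvi
      · show w₂⁻¹ • (D.s i • v) ∈ D.negRoots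
        rw [winv] at hv2
        rw [mul_smul] at hv2
        exact hv2
  · intro hv
    rcases Set.mem_insert_iff.mp hv with rfl | ⟨u, ⟨hu1, hu2⟩, rfl⟩
    · refine ⟨D.sroot_mem_pos i, ?_⟩
      rw [winv, mul_smul, D.s_smul_self, smul_neg]
      show -(w₂⁻¹ • D.sroot i) ∈ D.negRoots
      simpa [negRoots] using hw2pos
    · have huni : u ≠ D.sroot i := by
        rintro rfl
        exact D.pos_neg_disjoint hw2pos hu2
      refine ⟨D.s_smul_pos hu1 huni, ?_⟩
      rw [winv, mul_smul, D.smul_smul_s]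
      exact hu2

lemma reduced_cons {w : D.W} {i : Fin D.n} {ω : List (Fin D.n)}
    (h : D.IsReduced w (i :: ω)) :
    w = D.s i * D.wordProd ω ∧ D.IsReduced (D.wordProd ω) ω ∧
      D.len w = D.len (D.wordProd ω) + 1 := by
  obtain ⟨hp, hl⟩ := h
  have h1 : D.len (D.wordProd ω) ≤ ω.length := D.len_le _ _ rfl
  have h2 : D.len w ≤ D.len (D.wordProd ω) + 1 := by
    have h3 := D.len_mul_le (D.s i) (D.wordProd ω)
    have h4 := D.len_s_le i
    rw [← D.wordProd_cons, hp] at h3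
    omega
  rw [List.length_cons] at hl
  refine ⟨by rw [← hp, D.wordProd_cons], ⟨rfl, by omega⟩, by omega⟩

lemma invSet_finite (w : D.W) : (D.invSet w).Finite := by
  have main : ∀ (N : ℕ) (w : D.W), D.len w ≤ N → (D.invSet w).Finite := by
    intro N
    induction N with
    | zero =>
        intro w hw
        have hw1 : w = 1 := D.eq_one_of_len_eq_zero (by omega)
        rw [hw1, D.invSet_one]
        exact Set.finite_empty
    | succ N ih =>
        intro w hw
        by_cases h0 : D.len w = 0
        · have hw1 : w = 1 := D.eq_one_of_len_eq_zero h0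
          rw [hw1, D.invSet_one]
          exact Set.finite_empty
        · obtain ⟨ω, hred⟩ := D.exists_reduced w
          cases ω with
          | nil =>
              exfalso
              apply h0
              rw [← hred.2]
              rfl
          | cons i ω' =>
              obtain ⟨hw', hred', hl⟩ := D.reduced_cons hred
              rw [hw', (D.invSet_succ i _ (by rw [← hw']; omega)).1]
              exact ((ih _ (by omega)).image _).insert _
  exact main (D.len w) w le_rfl


/-! ### Bruhat order lemmas -/

lemma bruhat_refl (w : D.W) : D.bruhatLE w w := by
  obtain ⟨ω, hω⟩ := D.exists_reduced w
  exact ⟨ω, ω, hω, List.Sublist.refl ω, hω.1⟩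

lemma len_le_of_bruhatLE {v w : D.W} (h : D.bruhatLE v w) : D.len v ≤ D.len w := by
  obtain ⟨ω, ω', hred, hsub, hprod⟩ := h
  have h1 : D.len v ≤ ω'.length := D.len_le _ _ hprod
  have h2 : ω'.length ≤ ω.length := hsub.length_le
  rw [hred.2] at h2
  omega

lemma bruhat_of_le_tail {w w₂ : D.W} {i : Fin D.n}
    (hw : w = D.s i * w₂) (hlen : D.len w = D.len w₂ + 1) {v : D.W}
    (h : D.bruhatLE v w₂) : D.bruhatLE v w ∧ D.bruhatLE (D.s i * v) w := by
  obtain ⟨ρ, τ, hρred, hsub, hτ⟩ := h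
  have hred : D.IsReduced w (i :: ρ) := by
    constructor
    · rw [D.wordProd_cons, hρred.1, ← hw]
    · rw [List.length_cons, hρred.2, ← hlen]
  exact ⟨⟨i :: ρ, τ, hred, List.Sublist.cons i hsub, hτ⟩,
    ⟨i :: ρ, i :: τ, hred, List.Sublist.cons₂ i hsub, by rw [D.wordProd_cons, hτ]⟩⟩

/-! ### Reflections are determined by their roots -/

lemma reflection_eq (i : Fin D.n) (w : D.W) (j : Fin D.n)
    (hij : D.sroot i = w • D.sroot j) : w * D.s j * w⁻¹ = D.s i := by
  set f : D.Λ →+ ℤ := (D.scoroot j).comp (DistribMulAction.toAddMonoidHom D.Λ w⁻¹) with hfdef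
  have hf_apply : ∀ lam, f lam = D.scoroot j (w⁻¹ • lam) := fun lam => rfl
  have hwinvj : w⁻¹ • D.sroot i = D.sroot j := by
    rw [hij, ← mul_smul, inv_mul_cancel, one_smul]
  have hfi : f (D.sroot i) = 2 := by rw [hf_apply, hwinvj, D.cartan_diag]
  have hr : ∀ lam, (w * D.s j * w⁻¹) • lam = lam - f lam • D.sroot i := by
    intro lam
    rw [mul_smul, mul_smul, D.s_act, smul_sub, D.smul_zsmul, ← mul_smul,
      mul_inv_cancel, one_smul, ← hij, hf_apply]
  set h : D.Λ →+ ℤ := D.scoroot i - f with hhdef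
  have hh_apply : ∀ lam, h lam = D.scoroot i lam - f lam := fun lam => rfl
  have hhi : h (D.sroot i) = 0 := by rw [hh_apply, hfi, D.cartan_diag]; norm_num
  set u := (w * D.s j * w⁻¹) * D.s i with hudef
  have hu : ∀ lam, u • lam = lam + h lam • D.sroot i := by
    intro lam
    rw [hudef, mul_smul, D.s_act, hr]
    have hfarg : f (lam - D.scoroot i lam • D.sroot i) = f lam - D.scoroot i lam * 2 := by
      rw [map_sub, map_zsmul, hfi, smul_eq_mul]
    rw [hfarg, hh_apply]
    module
  have huinv : ∀ lam, u⁻¹ • lam = lam - h lam • D.sroot i := by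
    intro lam
    have h2 : u • (lam - h lam • D.sroot i) = lam := by
      rw [hu, map_sub, map_zsmul, hhi, smul_eq_mul, mul_zero, sub_zero]
      module
    calc u⁻¹ • lam = u⁻¹ • (u • (lam - h lam • D.sroot i)) := by rw [h2]
      _ = lam - h lam • D.sroot i := by rw [← mul_smul, inv_mul_cancel, one_smul]
  have hsimple : ∀ m, h (D.sroot m) = 0 := by
    intro m
    by_contra hhm
    have hmi : m ≠ i := by
      rintro rfl
      exact hhm hhi
    obtain ⟨K', hK'neg, hK'root⟩ :
        ∃ K' : ℤ, K' < 0 ∧ D.sroot m + K' • D.sroot i ∈ D.roots := by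
      rcases lt_or_gt_of_ne hhm with hlt | hgt
      · refine ⟨h (D.sroot m), hlt, ?_⟩
        rw [← hu]
        exact D.smul_mem_roots u (D.sroot_mem_roots m)
      · refine ⟨-(h (D.sroot m)), by omega, ?_⟩
        rw [neg_zsmul, ← sub_eq_add_neg, ← huinv]
        exact D.smul_mem_roots u⁻¹ (D.sroot_mem_roots m)
    -- contradiction with the positive/negative dichotomy
    set β := D.sroot m + K' • D.sroot i with hβ
    have hFsum : ∑ m', ((if m' = m then 1 else 0) + (if m' = i then K' else 0)) • D.sroot m'
        = β := by
      simp only [add_smul, Finset.sum_add_distrib]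
      have h1 : ∑ m', (if m' = m then (1:ℤ) else 0) • D.sroot m' = D.sroot m := by
        rw [Finset.sum_eq_single m (fun m' _ hm' => by simp [hm']) (by simp)]
        simp
      have h2 : ∑ m', (if m' = i then K' else 0) • D.sroot m' = K' • D.sroot i := by
        rw [Finset.sum_eq_single i (fun m' _ hm' => by simp [hm']) (by simp)]
        simp
      rw [h1, h2]
    rcases D.root_pos_or_neg hK'root with hp | hn
    · obtain ⟨q, hq⟩ := (D.mem_cone_iff _).mp hp.2
      have hqsum : ∑ m', ((q m' : ℤ)) • D.sroot m' = β := by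
        rw [← D.nat_sum_eq_int_sum, ← hq]
      have := D.coeff_unique (hFsum.trans hqsum.symm) i
      rw [if_neg (Ne.symm hmi), if_pos rfl, zero_add] at this
      omega
    · have hup : -β ∈ D.posRoots := hn
      obtain ⟨q, hq⟩ := (D.mem_cone_iff _).mp hup.2
      have hqsum : ∑ m', (-(q m' : ℤ)) • D.sroot m' = β := by
        have hns : ∑ m', (-(q m' : ℤ)) • D.sroot m' = -∑ m', ((q m' : ℤ)) • D.sroot m' := by
          simp [neg_smul]
        rw [hns, ← D.nat_sum_eq_int_sum, ← hq, neg_neg]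
      have := D.coeff_unique (hFsum.trans hqsum.symm) m
      rw [if_pos rfl, if_neg hmi, add_zero] at this
      omega
  -- h vanishes on the whole cone, hence on all roots
  have hcone0 : ∀ x ∈ (AddSubmonoid.closure (Set.range D.sroot) : AddSubmonoid D.Λ),
      h x = 0 := by
    intro x hx
    induction hx using AddSubmonoid.closure_induction with
    | mem y hy =>
        obtain ⟨m, rfl⟩ := hy
        exact hsimple m
    | zero => exact map_zero h
    | add x y _ _ hx hy => rw [map_add, hx, hy, add_zero]
  have hroots : ∀ v ∈ D.roots, u • v = v := by
    intro v hv
    rcases D.root_pos_or_neg hv with hp | hn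
    · rw [hu, hcone0 v hp.2, zero_zsmul, add_zero]
    · have hup : -v ∈ D.posRoots := hn
      have h0 : h v = 0 := by
        have := hcone0 _ hup.2
        rw [map_neg] at this
        omega
      rw [hu, h0, zero_zsmul, add_zero]
  -- conclude u = 1
  have hu1 : u = 1 := by
    by_contra hne1
    have hlu : 1 ≤ D.len u := by
      rcases Nat.eq_zero_or_pos (D.len u) with h0 | h0
      · exact absurd (D.eq_one_of_len_eq_zero h0) hne1
      · omega
    obtain ⟨ω, hred⟩ := D.exists_reduced u
    cases ω with
    | nil =>
        have : D.len u = 0 := by rw [← hred.2]; rfl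
        omega
    | cons m ω' =>
        obtain ⟨hw', hred', hl⟩ := D.reduced_cons hred
        have hz : u⁻¹ * D.s m = (D.wordProd ω')⁻¹ := by
          rw [hw', mul_inv_rev, mul_assoc, D.s_inv, D.s_sq, mul_one]
        have hneg : u⁻¹ • D.sroot m ∈ D.negRoots := by
          apply D.neg_of_len_pred
          rw [hz, D.len_inv, D.len_inv]
          omega
        have hfix : u⁻¹ • D.sroot m = D.sroot m := by
          have hf2 := hroots (D.sroot m) (D.sroot_mem_roots m)
          calc u⁻¹ • D.sroot m = u⁻¹ • (u • D.sroot m) := by rw [hf2]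
            _ = D.sroot m := by rw [← mul_smul, inv_mul_cancel, one_smul]
        rw [hfix] at hneg
        exact D.pos_neg_disjoint (D.sroot_mem_pos m) hneg
  have hfin : w * D.s j * w⁻¹ * D.s i = 1 := by rw [← hudef]; exact hu1
  calc w * D.s j * w⁻¹ = ((w * D.s j * w⁻¹) * D.s i) * D.s i := by
        rw [mul_assoc (w * D.s j * w⁻¹) (D.s i) (D.s i), D.s_sq, mul_one]
    _ = D.s i := by rw [hfin, one_mul]

lemma refl_sroot (i : Fin D.n) : D.refl (D.sroot i) = D.s i := by
  have hmem : D.sroot i ∈ D.roots := D.sroot_mem_roots i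
  rw [refl, dif_pos hmem]
  exact D.reflection_eq i _ _ hmem.choose_spec.choose_spec

end DemazureSetup

/-! ### Hecke setup lemmas -/

namespace HeckeSetup

variable {R : Type} [CommRing R] {D : DemazureSetup R} (H : HeckeSetup R D)

lemma xQ'_isUnit {v : D.Λ} (hv : v ∈ D.roots) : IsUnit (H.xQ' (0, v)) := by
  haveI := H.loc'
  exact IsLocalization.map_units (M := Submonoid.closure
    ((fun v => H.x' (0, v)) '' {v | ∃ (w : D.W) (i : Fin D.n), v = w • D.sroot i})) H.Q'
    ⟨H.x' (0, v), Submonoid.subset_closure ⟨v, hv, rfl⟩⟩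

lemma smul_xQ' (w : D.W) (p : ℤ × D.Λ) : w • H.xQ' p = H.xQ' (p.1, w • p.2) := by
  rw [xQ', H.smul_SQ', H.smul_x']
  rfl

lemma isUnit_smul (w : D.W) {q : H.Q'} (hq : IsUnit q) : IsUnit (w • q) := by
  obtain ⟨uq, rfl⟩ := hq
  refine IsUnit.of_mul_eq_one (w • ((uq⁻¹ : H.Q'ˣ) : H.Q')) ?_
  rw [← smul_mul', Units.mul_inv, smul_one]

lemma smul_inverse (w : D.W) (q : H.Q') :
    w • Ring.inverse q = Ring.inverse (w • q) := by
  by_cases hq : IsUnit q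
  · obtain ⟨uq, rfl⟩ := hq
    have h1 : (w • (uq : H.Q')) * (w • ((uq⁻¹ : H.Q'ˣ) : H.Q')) = 1 := by
      rw [← smul_mul', Units.mul_inv, smul_one]
    have h2 : (w • ((uq⁻¹ : H.Q'ˣ) : H.Q')) * (w • (uq : H.Q')) = 1 := by
      rw [← smul_mul', Units.inv_mul, smul_one]
    let U : H.Q'ˣ := ⟨w • (uq : H.Q'), w • ((uq⁻¹ : H.Q'ˣ) : H.Q'), h1, h2⟩
    have hU : w • ((uq : H.Q'ˣ) : H.Q') = (U : H.Q') := rfl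
    rw [Ring.inverse_unit uq, hU, Ring.inverse_unit U]
    rfl
  · have hq2 : ¬ IsUnit (w • q) := by
      intro hc
      apply hq
      have : q = w⁻¹ • (w • q) := by rw [← mul_smul, inv_mul_cancel, one_smul]
      rw [this]
      exact H.isUnit_smul w⁻¹ hc
    rw [Ring.inverse_non_unit _ hq, smul_zero, Ring.inverse_non_unit _ hq2]

lemma Ti_eq (i : Fin D.n) :
    H.Ti i = H.ι' (H.xQ' (1,0) * Ring.inverse (H.xQ' (0, D.sroot i)))
      + H.ι' (1 - H.xQ' (1,0) * Ring.inverse (H.xQ' (0, D.sroot i))) * H.δ' (D.s i) := by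
  rw [Ti, Tel, Xel', D.refl_sroot]
  have hSQ : H.SQW' (H.x' (1,0)) = H.ι' (H.xQ' (1,0)) := rfl
  rw [hSQ, map_sub, map_mul, map_one]
  rw [mul_sub, mul_one]
  rw [sub_mul, one_mul]
  noncomm_ring

lemma coeff_simple (i : Fin D.n) :
    1 - H.xQ' (1,0) * Ring.inverse (H.xQ' (0, D.sroot i))
      = (H.xQ' (0, D.sroot i) - H.xQ' (1,0)) * Ring.inverse (H.xQ' (0, D.sroot i)) := by
  have hy := H.xQ'_isUnit (D.sroot_mem_roots i)
  rw [sub_mul, Ring.mul_inverse_cancel _ hy]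

lemma smul_factor (w : D.W) (a : D.Λ) :
    w • ((H.xQ' (0,a) - H.xQ' (1,0)) * Ring.inverse (H.xQ' (0,a)))
      = (H.xQ' (0, w • a) - H.xQ' (1,0)) * Ring.inverse (H.xQ' (0, w • a)) := by
  rw [smul_mul', smul_sub, H.smul_xQ', H.smul_xQ', H.smul_inverse, H.smul_xQ']
  simp

lemma Tword_cons (i : Fin D.n) (ω : List (Fin D.n)) :
    H.Tword (i :: ω) = H.Ti i * H.Tword ω := by
  simp [Tword]

end HeckeSetup

/-- **Lemma 6.2**:  for any `w ∈ W` and any reduced word `I_w` of `w`, one has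
`T_{I_w} = Σ_{v ≤ w} q_{I_w,v} δ_v` in `Q'_W` with all `q_{I_w,v} ∈ Q'`, the sum over
`v ≤ w` in the Bruhat order, and top coefficient
`q_{I_w,w} = Π_{α ∈ Φ_w} (x_α - x_γ)/x_α`. -/
theorem Tword_delta_expansion
    {R : Type} [CommRing R] (D : DemazureSetup R) (H : HeckeSetup R D)
    (w : D.W) (ω : List (Fin D.n)) (hω : D.IsReduced w ω) :
    ∃ q : D.W →₀ H.Q',
      (∀ v ∈ q.support, D.bruhatLE v w) ∧
      H.Tword ω = q.sum (fun v c => H.ι' c * H.δ' v) ∧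
      q w = ∏ᶠ a ∈ D.invSet w,
        (H.xQ' (0, a) - H.xQ' (1, 0)) * Ring.inverse (H.xQ' (0, a)) := by
  induction ω generalizing w with
  | nil =>
      have hw1 : w = 1 := by rw [← hω.1]; rfl
      subst hw1
      refine ⟨Finsupp.single 1 1, ?_, ?_, ?_⟩
      · intro v hv
        have hv1 : v = 1 := by
          have := Finsupp.support_single_subset hv
          simpa using this
        subst hv1
        exact D.bruhat_refl 1
      · rw [Finsupp.sum_single_index (by rw [map_zero, zero_mul])]
        rw [map_one, map_one, one_mul]
        rfl
      · rw [Finsupp.single_eq_same, D.invSet_one, finprod_mem_empty]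
  | cons i ω₂ ih =>
      obtain ⟨hw', hred₂, hl⟩ := D.reduced_cons hω
      obtain ⟨q₂, hsupp₂, hsum₂, htop₂⟩ := ih (D.wordProd ω₂) hred₂
      set w₂ := D.wordProd ω₂ with hw₂def
      set y := H.xQ' (0, D.sroot i) with hydef
      set g := H.xQ' (1,(0:D.Λ)) with hgdef
      set a : H.Q' := g * Ring.inverse y with hadef
      set bb : H.Q' := 1 - a with hbbdef
      set F : D.W → H.Q' → H.QW' := fun v c => H.ι' c * H.δ' v with hFdef
      have hF0 : ∀ v, F v 0 = 0 := fun v => by rw [hFdef]; simp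
      set qA : D.W →₀ H.Q' := q₂.mapRange (fun c => a * c) (mul_zero a) with hqAdef
      set qB : D.W →₀ H.Q' := Finsupp.equivMapDomain (Equiv.mulLeft (D.s i))
        (q₂.mapRange (fun c => bb * (D.s i • c)) (by simp)) with hqBdef
      have hsinv : (D.s i)⁻¹ = D.s i := D.s_inv i
      have hqBapply : ∀ v, qB v = bb * (D.s i • q₂ (D.s i * v)) := by
        intro v
        rw [hqBdef, Finsupp.equivMapDomain_apply, Equiv.mulLeft_symm, Finsupp.mapRange_apply,
          Equiv.coe_mulLeft, hsinv]
      refine ⟨qA + qB, ?_, ?_, ?_⟩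
      · intro v hv
        rcases Finset.mem_union.mp (Finsupp.support_add hv) with hvA | hvB
        · have hv₂ : v ∈ q₂.support := Finsupp.support_mapRange hvA
          exact (D.bruhat_of_le_tail hw' hl (hsupp₂ v hv₂)).1
        · have hVne : qB v ≠ 0 := (Finsupp.mem_support_iff).mp hvB
          rw [hqBapply] at hVne
          have hq₂ne : q₂ (D.s i * v) ≠ 0 := by
            intro hc
            apply hVne
            rw [hc, smul_zero, mul_zero]
          have hle := (D.bruhat_of_le_tail hw' hl
            (hsupp₂ _ (Finsupp.mem_support_iff.mpr hq₂ne))).2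
          have hvv : D.s i * (D.s i * v) = v := by rw [← mul_assoc, D.s_sq, one_mul]
          rwa [hvv] at hle
      · rw [H.Tword_cons, hsum₂, H.Ti_eq i]
        rw [Finsupp.sum_add_index' hF0
          (fun v c₁ c₂ => by rw [hFdef]; simp only; rw [map_add, add_mul])]
        rw [hqAdef, hqBdef,
          Finsupp.sum_mapRange_index (fun v => hF0 _),
          Finsupp.sum_equivMapDomain,
          Finsupp.sum_mapRange_index (fun v => hF0 _),
          add_mul, Finsupp.mul_sum, Finsupp.mul_sum]
        congr 1
        · apply Finsupp.sum_congr
          intro v _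
          rw [hFdef]
          simp only
          rw [hadef, map_mul H.ι' (g * Ring.inverse y) (q₂ v), map_mul H.ι' g (Ring.inverse y)]
          noncomm_ring
        · apply Finsupp.sum_congr
          intro v _
          rw [hFdef]
          simp only [Equiv.coe_mulLeft]
          -- ι' bb * δ'(s i) * (ι' c * δ' v) = ι' (bb * (s i • c)) * δ' (s i * v)
          rw [map_mul H.δ', map_mul H.ι']
          calc H.ι' bb * H.δ' (D.s i) * (H.ι' (q₂ v) * H.δ' v)
              = H.ι' bb * (H.δ' (D.s i) * H.ι' (q₂ v)) * H.δ' v := by noncomm_ring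
            _ = H.ι' bb * (H.ι' (D.s i • q₂ v) * H.δ' (D.s i)) * H.δ' v := by
                rw [H.twist']
            _ = H.ι' bb * H.ι' (D.s i • q₂ v) * (H.δ' (D.s i) * H.δ' v) := by noncomm_ring
      · -- top coefficient
        have hlen_si : D.len (D.s i * w₂) = D.len w₂ + 1 := by rw [← hw']; omega
        obtain ⟨hinv_eq, hnotin⟩ := D.invSet_succ i w₂ hlen_si
        have hq₂w : q₂ w = 0 := by
          by_contra hne
          have h1 := hsupp₂ w (Finsupp.mem_support_iff.mpr hne)
          have h2 := D.len_le_of_bruhatLE h1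
          omega
        have hsiw : D.s i * w = w₂ := by rw [hw', ← mul_assoc, D.s_sq, one_mul]
        have hqA0 : qA w = 0 := by rw [hqAdef, Finsupp.mapRange_apply, hq₂w, mul_zero]
        have hqBw : qB w = bb * (D.s i • q₂ w₂) := by rw [hqBapply, hsiw]
        rw [Finsupp.add_apply, hqA0, hqBw, zero_add, htop₂]
        set f : D.Λ → H.Q' := fun v => (H.xQ' (0,v) - g) * Ring.inverse (H.xQ' (0,v)) with hfdef
        have hfin₂ := D.invSet_finite w₂
        set T : Finset D.Λ := hfin₂.toFinset with hTdef
        have hcoeT : (T : Set D.Λ) = D.invSet w₂ := hfin₂.coe_toFinset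
        have hprod₂ : (∏ᶠ v ∈ D.invSet w₂, f v) = ∏ v ∈ T, f v := by
          rw [← hcoeT, finprod_mem_coe_finset]
        rw [hprod₂]
        have hact : D.s i • (∏ v ∈ T, f v) = ∏ v ∈ T, f (D.s i • v) := by
          have h1 : D.s i • (∏ v ∈ T, f v)
              = MulSemiringAction.toRingHom D.W H.Q' (D.s i) (∏ v ∈ T, f v) := rfl
          rw [h1, map_prod]
          apply Finset.prod_congr rfl
          intro v _
          have h2 : MulSemiringAction.toRingHom D.W H.Q' (D.s i) (f v) = D.s i • f v := rfl
          rw [h2, hfdef]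
          simp only
          rw [hgdef]
          exact H.smul_factor (D.s i) v
        rw [hact]
        have hprodim : (∏ v ∈ T, f (D.s i • v))
            = ∏ u ∈ T.image (fun v => D.s i • v), f u := by
          rw [Finset.prod_image]
          intro x _ z _ hxz
          have := congrArg (fun t => D.s i • t) hxz
          simpa [D.smul_smul_s] using this
        rw [hprodim]
        have hbb_f : bb = f (D.sroot i) := by
          rw [hbbdef, hadef, hfdef, hydef, hgdef]
          exact H.coeff_simple i
        have hnotinT : D.sroot i ∉ T.image (fun v => D.s i • v) := by
          intro hc
          apply hnotin
          rcases Finset.mem_image.mp hc with ⟨u, hu, huv⟩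
          exact ⟨u, hfin₂.mem_toFinset.mp hu, huv⟩
        rw [hbb_f, ← Finset.prod_insert hnotinT]
        have hw_inv : D.invSet w
            = ↑(insert (D.sroot i) (T.image (fun v => D.s i • v))) := by
          rw [hw', hinv_eq]
          rw [Finset.coe_insert, Finset.coe_image, hcoeT]
        rw [hw_inv, finprod_mem_coe_finset]
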